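/- arXiv:2108.04956 — 3 statements merged into one kernel-verified Lean document; each statement's English description precedes it below -/
import Mathlib

section
/- Suppose the initial data z_1(0),...,z_N(0) are all nonzero, and suppose Z ∈ ℂ satisfies the N algebraic constraints Z = r_n^{-1} · ∑_{m} c_{n,m} ∏_{ℓ=1}^{N} r_ℓ^{m_ℓ} for every n ∈ {1,...,N}, where r_ℓ := z_ℓ(0)/z_N(0) (so r_N = 1) and the sum runs over all multi-indices m of degree M. Then the sequence defined by z_n(s) := z_n(0) · [z_N(0)]^{M^s − 1} · Z^{e(s)} for n = 1,...,N and s ∈ ℕ satisfies the system of first-order difference equations z_n(s+1) = ∑_{m} c_{n,m} ∏_{ℓ=1}^{N} [z_ℓ(s)]^{m_ℓ} for all n ∈ {1,...,N} and all s ∈ ℕ. -/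
/-- Fix `N ≥ 1`, `M ≥ 2`, coefficients `c n m` (for `n : Fin N` and
multi-indices `m : Fin N → ℕ` of degree `M`), and nonzero initial data `z0`.
If `Z` satisfies the `N` algebraic constraints
`Z = rₙ⁻¹ ∑ₘ c n m ∏ₗ rₗ^{mₗ}` with `rₗ = z0 ℓ / z0 (N-1)`, then
`z n s = z0 n * (z0 (N-1))^(M^s - 1) * Z^(e s)` (with `e s = ∑_{k<s} M^k`) solves the
system `z n (s+1) = ∑ₘ c n m ∏ₗ (z ℓ s)^{mₗ}`. -/
theorem solvable_system_homogeneous_polynomial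
    (N M : ℕ) (hN : 1 ≤ N) (hM : 2 ≤ M)
    (c : Fin N → (Fin N → ℕ) → ℂ)
    (z0 : Fin N → ℂ) (hz0 : ∀ n, z0 n ≠ 0)
    (Z : ℂ)
    (r : Fin N → ℂ) (hr : ∀ ℓ, r ℓ = z0 ℓ / z0 ⟨N - 1, by omega⟩)
    (hconstraint : ∀ n : Fin N,
      Z = (r n)⁻¹ *
        ∑ m ∈ Finset.Nat.antidiagonalTuple N M, c n m * ∏ ℓ, (r ℓ) ^ (m ℓ))
    (z : Fin N → ℕ → ℂ)
    (hz : ∀ n s, z n s =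
      z0 n * (z0 ⟨N - 1, by omega⟩) ^ (M ^ s - 1) *
        Z ^ (∑ k ∈ Finset.range s, M ^ k)) :
    ∀ (n : Fin N) (s : ℕ),
      z n (s + 1) =
        ∑ m ∈ Finset.Nat.antidiagonalTuple N M, c n m * ∏ ℓ, (z ℓ s) ^ (m ℓ) := by

  intro n s
  have hwne : z0 ⟨N - 1, by omega⟩ ≠ 0 := hz0 _
  set w : ℂ := z0 ⟨N - 1, by omega⟩ with hw
  set E : ℕ := ∑ k ∈ Finset.range s, M ^ k with hE
  have hMs1 : 1 ≤ M ^ s := Nat.one_le_pow _ _ (by omega)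
  have hMs1' : 1 ≤ M ^ (s + 1) := Nat.one_le_pow _ _ (by omega)
  have hzform : ∀ ℓ, z ℓ s = r ℓ * (w ^ (M ^ s) * Z ^ E) := by
    intro ℓ
    rw [hz, hr]
    have h2 : w * w ^ (M ^ s - 1) = w ^ (M ^ s) := by
      rw [← pow_succ']; congr 1; omega
    field_simp
    rw [← h2]; ring
  have hS : ∑ m ∈ Finset.Nat.antidiagonalTuple N M, c n m * ∏ ℓ, (r ℓ) ^ (m ℓ)
      = r n * Z := by
    have hrn : r n ≠ 0 := by rw [hr]; exact div_ne_zero (hz0 _) hwne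
    rw [hconstraint n]; field_simp
  have hEsucc : ∑ k ∈ Finset.range (s + 1), M ^ k = M * E + 1 := by
    rw [Finset.sum_range_succ']
    simp [hE, pow_succ, Finset.mul_sum]
    ring
  calc z n (s + 1) = z0 n * w ^ (M ^ (s + 1) - 1) * Z ^ (M * E + 1) := by
        rw [hz, hEsucc]
    _ = (r n * Z) * (w ^ (M ^ s) * Z ^ E) ^ M := by
        rw [hr, mul_pow, ← pow_mul, ← pow_mul]
        have h2 : (M ^ s) * M = (M ^ (s + 1) - 1) + 1 := by
          rw [← pow_succ]; omega
        have h3 : M * E + 1 = E * M + 1 := by ring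
        rw [h2, h3, pow_succ, pow_succ]
        field_simp
        ring
    _ = ∑ m ∈ Finset.Nat.antidiagonalTuple N M, c n m * ∏ ℓ, (z ℓ s) ^ (m ℓ) := by
        rw [← hS, Finset.sum_mul]
        refine Finset.sum_congr rfl fun m hm => ?_
        have hdeg : ∑ ℓ, m ℓ = M := (Finset.Nat.mem_antidiagonalTuple.mp hm)
        simp only [hzform, mul_pow, Finset.prod_mul_distrib,
          Finset.prod_pow_eq_pow_sum, hdeg]
        ring
end

section
/- Let c_{n,m} ∈ ℂ be given for n ∈ {1,2} and m ∈ {0,1,2,3,4}, and consider the system z_n(s+1) = ∑_{m=0}^{4} c_{n,m} [z_1(s)]^{4−m} [z_2(s)]^{m}, n = 1,2. Suppose z_1(0) ≠ 0, z_2(0) ≠ 0, set r := z_1(0)/z_2(0), and suppose Z ∈ ℂ satisfies the two constraints Z = r^{−1} ∑_{m=0}^{4} c_{1,m} r^{4−m} and Z = ∑_{m=0}^{4} c_{2,m} r^{4−m}. Then z_n(s) := z_n(0) · [z_2(0)]^{4^s − 1} · Z^{(4^s − 1)/3} (with integer exponent (4^s − 1)/3 = ∑_{k=0}^{s−1} 4^k)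 satisfies the system for all s ∈ ℕ and n = 1,2. -/
/-- The case `N = 2`, `M = 4`: given coefficients `c n m`
(`n : Fin 2`, `m ∈ {0,...,4}`), nonzero initial data `z0 0, z0 1`, the ratio
`r = z0 0 / z0 1`, and `Z` satisfying the two constraints
`Z = r⁻¹ ∑_{m=0}^{4} c 0 m * r^(4-m)` and `Z = ∑_{m=0}^{4} c 1 m * r^(4-m)`, the
functions `z n s = z0 n * (z0 1)^(4^s - 1) * Z^(∑_{k<s} 4^k)` satisfy the system
`z n (s+1) = ∑_{m=0}^{4} c n m * (z 0 s)^(4-m) * (z 1 s)^m`. -/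
theorem solvable_system_N2_M4
    (c : Fin 2 → ℕ → ℂ)
    (z0 : Fin 2 → ℂ) (h1 : z0 0 ≠ 0) (h2 : z0 1 ≠ 0)
    (r : ℂ) (hr : r = z0 0 / z0 1)
    (Z : ℂ)
    (hc1 : Z = r⁻¹ * ∑ m ∈ Finset.range 5, c 0 m * r ^ (4 - m))
    (hc2 : Z = ∑ m ∈ Finset.range 5, c 1 m * r ^ (4 - m))
    (z : Fin 2 → ℕ → ℂ)
    (hz : ∀ (n : Fin 2) (s : ℕ),
      z n s = z0 n * (z0 1) ^ (4 ^ s - 1) * Z ^ (∑ k ∈ Finset.range s, 4 ^ k)) :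
    ∀ (n : Fin 2) (s : ℕ),
      z n (s + 1) =
        ∑ m ∈ Finset.range 5, c n m * (z 0 s) ^ (4 - m) * (z 1 s) ^ m := by
  intro n s
  have hrne : r ≠ 0 := by rw [hr]; exact div_ne_zero h1 h2
  have hAr : z0 0 = r * z0 1 := by rw [hr, div_mul_cancel₀ _ h2]
  have hgeom : 3 * (∑ k ∈ Finset.range s, 4 ^ k) + 1 = 4 ^ s := by
    induction s with
    | zero => simp
    | succ m ih =>
      rw [Finset.sum_range_succ, pow_succ]
      omega
  set T := ∑ k ∈ Finset.range s, 4 ^ k with hT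
  have hts : 4 ^ s - 1 = 3 * T := by omega
  have hT' : ∑ k ∈ Finset.range (s + 1), 4 ^ k = 4 * T + 1 := by
    rw [Finset.sum_range_succ, ← hT]; omega
  have hts' : 4 ^ (s + 1) - 1 = 12 * T + 3 := by
    have h4 : 4 ^ (s + 1) = 4 * 4 ^ s := by rw [pow_succ]; ring
    omega
  have e0 := hz 0 s
  have e1 := hz 1 s
  have e := hz n (s + 1)
  rw [hts] at e0 e1
  rw [hts', hT'] at e
  rw [e, e0, e1]
  simp only [Finset.sum_range_succ, Finset.sum_range_zero] at hc1 hc2 ⊢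
  norm_num at hc1 hc2 ⊢
  have hc1' : r * Z = c 0 0 * r ^ 4 + c 0 1 * r ^ 3 + c 0 2 * r ^ 2 +
      c 0 3 * r + c 0 4 := by
    rw [hc1]; field_simp
  fin_cases n <;> simp only [Fin.mk_zero, Fin.mk_one] at e ⊢
  · rw [hAr]
    linear_combination ((z0 1) ^ (12 * T + 4) * Z ^ (4 * T)) * hc1'
  · rw [hAr]
    linear_combination ((z0 1) ^ (12 * T + 4) * Z ^ (4 * T)) * hc2
end

section
/- Suppose the initial data z_1(0),...,z_N(0) are all nonzero, and suppose Z ∈ ℂ satisfies, for every n ∈ {1,...,N}, the constraint Z = r_n^{−1} · ∑_{j,k} c_{n,j,k} r_j r_k, where r_ℓ := z_ℓ(0)/z_N(0) and the sum runs over all pairs (j,k) ∈ {1,...,N}² with coefficients c_{n,j,k} ∈ ℂ. Then z_n(s) := z_n(0) · [z_N(0)]^{2^s − 1} · Z^{2^s − 1} satisfies the quadratic system z_n(s+1) = ∑_{j,k} c_{n,j,k} z_j(s) z_k(s) for all n ∈ {1,...,N} and all s ∈ ℕ. -/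
/-- The quadratic case `M = 2`: fix `N ≥ 1`, coefficients
`c n j k : ℂ`, nonzero initial data `z0`, and `Z` satisfying the constraints
`Z = rₙ⁻¹ ∑_{j,k} c n j k * r j * r k` with `rₗ = z0 ℓ / z0 (N-1)`. Then
`z n s = z0 n * (z0 (N-1))^(2^s - 1) * Z^(2^s - 1)` satisfies the quadratic system
`z n (s+1) = ∑_{j,k} c n j k * z j s * z k s`. -/
theorem solvable_quadratic_system
    (N : ℕ) (hN : 1 ≤ N)
    (c : Fin N → Fin N → Fin N → ℂ)
    (z0 : Fin N → ℂ) (hz0 : ∀ n, z0 n ≠ 0)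
    (r : Fin N → ℂ) (hr : ∀ ℓ, r ℓ = z0 ℓ / z0 ⟨N - 1, by omega⟩)
    (Z : ℂ)
    (hconstraint : ∀ n : Fin N,
      Z = (r n)⁻¹ * ∑ j : Fin N, ∑ k : Fin N, c n j k * r j * r k)
    (z : Fin N → ℕ → ℂ)
    (hz : ∀ n s, z n s =
      z0 n * (z0 ⟨N - 1, by omega⟩) ^ (2 ^ s - 1) * Z ^ (2 ^ s - 1)) :
    ∀ (n : Fin N) (s : ℕ),
      z n (s + 1) = ∑ j : Fin N, ∑ k : Fin N, c n j k * z j s * z k s := by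
  intro n s
  set w := z0 ⟨N - 1, by omega⟩ with hwdef
  have hwne : w ≠ 0 := hz0 _
  have hz0r : ∀ ℓ, z0 ℓ = r ℓ * w := by
    intro ℓ; rw [hr ℓ, div_mul_cancel₀ _ hwne]
  have hrn : r n ≠ 0 := by
    intro h; exact hz0 n (by rw [hz0r n, h, zero_mul])
  have hS : (∑ j : Fin N, ∑ k : Fin N, c n j k * r j * r k) = r n * Z := by
    rw [hconstraint n, mul_inv_cancel_left₀ hrn]
  have hpow : 2 ^ (s + 1) - 1 = 2 * (2 ^ s - 1) + 1 := by
    have : 1 ≤ 2 ^ s := Nat.one_le_two_pow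
    omega
  calc z n (s+1) = z0 n * w ^ (2 ^ (s+1) - 1) * Z ^ (2 ^ (s+1) - 1) := hz n (s+1)
    _ = (r n * Z) * ((w ^ (2 ^ s - 1) * w * Z ^ (2 ^ s - 1)) ^ 2) := by
        rw [hz0r n, hpow]; ring
    _ = (∑ j : Fin N, ∑ k : Fin N, c n j k * r j * r k) *
          ((w ^ (2 ^ s - 1) * w * Z ^ (2 ^ s - 1)) ^ 2) := by rw [hS]
    _ = ∑ j : Fin N, ∑ k : Fin N, c n j k * z j s * z k s := by
        rw [Finset.sum_mul]
        refine Finset.sum_congr rfl fun j _ => ?_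
        rw [Finset.sum_mul]
        refine Finset.sum_congr rfl fun k _ => ?_
        rw [hz j s, hz k s, hz0r j, hz0r k]; ring
end
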